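/- Let g ∈ F_{q^m}^n with rank_q(g) = n ≤ m, and let G̃ ∈ F_{q^m}^{(n−t−1)×n} be the Moore matrix with rows g, g^{[1]}, …, g^{[n−t−2]} (entrywise q-power Frobenius). Let E ∈ F_{q^m}^{ℓ×n} with rank_{F_q}(E) = rank_{F_{q^m}}(E) = t, and let Z be the vertical stack of E, E^{[1]}, …, E^{[n−k−t−1]} for some k with t ≤ n−k. Then rank_{F_{q^m}}(Z) = t, every nonzero F_{q^m}-linear combination of the rows of G̃ has rank weight at least t+2, every F_{q^m}-linear combination of rows of Z has rank weight at most t, and consequently the stacked matrix [G̃; Z] has F_{q^m}-rank (n−t−1) + t = n−1. -/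

import Mathlib

open Matrix

noncomputable def extV {K L : Type} [Field K] [Field L] [Algebra K L]
    {m n : ℕ} (γ : Module.Basis (Fin m) K L) (v : Fin n → L) : Matrix (Fin m) (Fin n) K :=
  Matrix.of fun i j => γ.repr (v j) i

noncomputable def extM {K L : Type} [Field K] [Field L] [Algebra K L]
    {m n : ℕ} {ι : Type} (γ : Module.Basis (Fin m) K L) (E : Matrix ι (Fin n) L) :
    Matrix (ι × Fin m) (Fin n) K :=
  Matrix.of fun p j => γ.repr (E p.1 j) p.2

section LOAux

open Module Submodule

variable {K L : Type} [Field K] [Fintype K] [Field L] [Algebra K L]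

lemma LO_exists_expChar : ∃ (p e : ℕ), p.Prime ∧ ExpChar L p ∧ Fintype.card K = p ^ e := by
  set p := ringChar K with hp
  haveI : CharP K p := ringChar.charP K
  have hprime : p.Prime := CharP.char_is_prime K p
  haveI : CharP L p := charP_of_injective_algebraMap (algebraMap K L).injective p
  obtain ⟨e, -, hcard⟩ := FiniteField.card K p
  exact ⟨p, e, hprime, ExpChar.prime hprime, hcard⟩

lemma LO_sum_pow (K : Type) [Field K] [Fintype K] [Algebra K L] {ι : Type*} (s : Finset ι)
    (x : ι → L) (r : ℕ) :
    (∑ i ∈ s, x i) ^ Fintype.card K ^ r = ∑ i ∈ s, x i ^ Fintype.card K ^ r := by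
  obtain ⟨p, e, hp, hch, hcard⟩ := LO_exists_expChar (K := K) (L := L)
  haveI := hch
  rw [hcard, ← pow_mul]
  exact map_sum (iterateFrobenius L p (e * r)) x s

omit [Fintype K] in
lemma LO_extV_rank {m n : ℕ} (γ : Basis (Fin m) K L) (v : Fin n → L) :
    (extV γ v).rank = finrank K (span K (Set.range v)) := by
  rw [Matrix.rank_eq_finrank_span_cols]
  have h1 : Set.range (extV γ v).col = ⇑γ.equivFun '' Set.range v := by
    rw [← Set.range_comp]
    rfl
  rw [h1, Submodule.span_image_linearEquiv]
  exact LinearEquiv.finrank_map_eq γ.equivFun _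

lemma LO_exists_qlinear {d : ℕ} (c : Fin d → L) :
    ∃ f : L →ₗ[K] L, ∀ x, f x = ∑ i, c i * x ^ Fintype.card K ^ (i : ℕ) := by
  obtain ⟨p, e, hp, hch, hcard⟩ := LO_exists_expChar (K := K) (L := L)
  haveI := hch
  refine ⟨{ toFun := fun x => ∑ i, c i * x ^ Fintype.card K ^ (i : ℕ),
            map_add' := ?_, map_smul' := ?_ }, fun _ => rfl⟩
  · intro x y
    rw [← Finset.sum_add_distrib]
    refine Finset.sum_congr rfl fun i _ => ?_
    rw [hcard, ← pow_mul, add_pow_expChar_pow, mul_add]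
  · intro a x
    simp only [RingHom.id_apply, Finset.smul_sum]
    refine Finset.sum_congr rfl fun i _ => ?_
    rw [Algebra.smul_def, Algebra.smul_def, mul_pow, ← map_pow,
      FiniteField.pow_card_pow]
    ring

lemma LO_finrank_ker_le [Fintype L] {d : ℕ} (c : Fin d → L) (hc : c ≠ 0) (f : L →ₗ[K] L)
    (hf : ∀ x, f x = ∑ i, c i * x ^ Fintype.card K ^ (i : ℕ)) :
    finrank K (LinearMap.ker f) ≤ d - 1 := by
  classical
  have hq1 : 1 < Fintype.card K := Fintype.one_lt_card
  obtain ⟨i0, hi0⟩ : ∃ i, c i ≠ 0 := by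
    by_contra h; push_neg at h; exact hc (funext h)
  set q := Fintype.card K with hq
  set P : Polynomial L := ∑ i, Polynomial.C (c i) * Polynomial.X ^ (q ^ (i : ℕ)) with hP
  have hcoeff : P.coeff (q ^ (i0 : ℕ)) = c i0 := by
    rw [hP, Polynomial.finset_sum_coeff, Finset.sum_eq_single i0]
    · simp
    · intro b _ hb
      rw [Polynomial.coeff_C_mul, Polynomial.coeff_X_pow, if_neg, mul_zero]
      intro h'
      exact hb (Fin.val_injective (Nat.pow_right_injective hq1 h'.symm))
    · simp
  have hPne : P ≠ 0 := fun h => hi0 (by rw [h, Polynomial.coeff_zero] at hcoeff; exact hcoeff.symm)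
  have hdeg : P.natDegree ≤ q ^ (d - 1) := by
    refine Polynomial.natDegree_sum_le_of_forall_le _ _ fun i _ => ?_
    refine (Polynomial.natDegree_C_mul_le _ _).trans ?_
    rw [Polynomial.natDegree_X_pow]
    exact Nat.pow_le_pow_right (by omega) (by omega)
  have hsub : (LinearMap.ker f : Set L).toFinset ⊆ P.roots.toFinset := by
    intro x hx
    rw [Set.mem_toFinset, SetLike.mem_coe, LinearMap.mem_ker, hf] at hx
    rw [Multiset.mem_toFinset, Polynomial.mem_roots hPne]
    simp only [Polynomial.IsRoot, hP, Polynomial.eval_finset_sum, Polynomial.eval_mul,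
      Polynomial.eval_C, Polynomial.eval_pow, Polynomial.eval_X]
    exact hx
  have hcard : Fintype.card (LinearMap.ker f) ≤ q ^ (d - 1) := by
    calc Fintype.card (LinearMap.ker f) = (LinearMap.ker f : Set L).toFinset.card := by
          rw [Set.toFinset_card]; rfl
      _ ≤ P.roots.toFinset.card := Finset.card_le_card hsub
      _ ≤ Multiset.card P.roots := Multiset.toFinset_card_le _
      _ ≤ P.natDegree := Polynomial.card_roots' P
      _ ≤ q ^ (d - 1) := hdeg
  have hpow : Fintype.card (LinearMap.ker f) = q ^ finrank K (LinearMap.ker f) :=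
    Module.card_eq_pow_finrank
  rw [hpow] at hcard
  exact (Nat.pow_le_pow_iff_right hq1).mp hcard

omit [Fintype K] in
lemma LO_exists_factorization {m n t ℓ : ℕ} (γ : Basis (Fin m) K L)
    (E : Matrix (Fin ℓ) (Fin n) L) (hEq : (extM γ E).rank = t) :
    ∃ (b : Fin t → Fin n → K) (A : Matrix (Fin ℓ) (Fin t) L),
      ∀ i j, E i j = ∑ s, A i s * algebraMap K L (b s j) := by
  classical
  set M := extM γ E with hM
  set W : Submodule K (Fin n → K) := span K (Set.range M) with hW
  haveI : FiniteDimensional K W := FiniteDimensional.span_of_finite K (Set.finite_range M)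
  have hfr : finrank K W = t := by
    rw [Matrix.rank_eq_finrank_span_row] at hEq; exact hEq
  let β : Basis (Fin t) K W := (Module.finBasis K W).reindex (finCongr hfr)
  have hmem : ∀ p, M p ∈ W := fun p => subset_span (Set.mem_range_self p)
  set cf : Fin ℓ → Fin m → Fin t → K :=
    fun i p s => β.repr ⟨M (i, p), hmem (i, p)⟩ s with hcf
  have hrow : ∀ (i : Fin ℓ) (p : Fin m) (j : Fin n),
      M (i, p) j = ∑ s, cf i p s * (β s : Fin n → K) j := by
    intro i p j
    have h1 := β.sum_repr ⟨M (i, p), hmem (i, p)⟩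
    have h2 := congrFun (congrArg (Subtype.val) h1) j
    simp only [Submodule.coe_sum, Submodule.coe_smul, Finset.sum_apply, Pi.smul_apply,
      smul_eq_mul] at h2
    exact h2.symm
  refine ⟨fun s => (β s : Fin n → K), Matrix.of fun i s => ∑ p, cf i p s • γ p, fun i j => ?_⟩
  have hbase : E i j = ∑ p, γ.repr (E i j) p • γ p := (γ.sum_repr (E i j)).symm
  have hMp : ∀ p : Fin m, γ.repr (E i j) p = M (i, p) j := fun p => rfl
  calc E i j = ∑ p, (∑ s, cf i p s * (β s : Fin n → K) j) • γ p := by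
        rw [hbase]
        exact Finset.sum_congr rfl fun p _ => by rw [hMp p, hrow]
    _ = ∑ p, ∑ s, (cf i p s * (β s : Fin n → K) j) • γ p := by
        exact Finset.sum_congr rfl fun p _ => Finset.sum_smul
    _ = ∑ s, ∑ p, (cf i p s * (β s : Fin n → K) j) • γ p := Finset.sum_comm
    _ = ∑ s, (Matrix.of fun i s => ∑ p, cf i p s • γ p) i s
          * algebraMap K L ((β s : Fin n → K) j) := by
        refine Finset.sum_congr rfl fun s _ => ?_
        simp only [Matrix.of_apply, Finset.sum_mul]
        refine Finset.sum_congr rfl fun p _ => ?_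
        rw [mul_comm (cf i p s), mul_smul, Algebra.smul_def, Algebra.smul_def]
        ring

end LOAux

open Module Submodule

theorem loidreau_overbeck_rank {q m n k ℓ t : ℕ} (K L : Type) [Field K] [Fintype K]
    [Field L] [Fintype L] [Algebra K L] (hK : Fintype.card K = q) (hL : Fintype.card L = q ^ m)
    (γ : Basis (Fin m) K L)
    (g : Fin n → L) (hg : (extV γ g).rank = n) (hnm : n ≤ m)
    (E : Matrix (Fin ℓ) (Fin n) L) (hEq : (extM γ E).rank = t) (hEqm : E.rank = t)
    (htk : t < n - k) (htn : t + 2 ≤ n) :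
    (Matrix.of fun (p : Fin (n - k - t) × Fin ℓ) (j : Fin n) =>
        E p.2 j ^ Fintype.card K ^ (p.1 : ℕ)).rank = t ∧
    (∀ c : Fin (n - t - 1) → L, c ≠ 0 →
      t + 2 ≤ (extV γ (c ᵥ* Matrix.of fun (i : Fin (n - t - 1)) (j : Fin n) =>
        g j ^ Fintype.card K ^ (i : ℕ))).rank) ∧
    (∀ c : Fin (n - k - t) × Fin ℓ → L,
      (extV γ (c ᵥ* Matrix.of fun (p : Fin (n - k - t) × Fin ℓ) (j : Fin n) =>
        E p.2 j ^ Fintype.card K ^ (p.1 : ℕ))).rank ≤ t) ∧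
    (Matrix.fromRows
        (Matrix.of fun (i : Fin (n - t - 1)) (j : Fin n) => g j ^ Fintype.card K ^ (i : ℕ))
        (Matrix.of fun (p : Fin (n - k - t) × Fin ℓ) (j : Fin n) =>
          E p.2 j ^ Fintype.card K ^ (p.1 : ℕ))).rank = n - 1 := by
  classical
  haveI : FiniteDimensional K L := Module.Finite.of_basis γ
  set Gm : Matrix (Fin (n - t - 1)) (Fin n) L :=
    Matrix.of fun i j => g j ^ Fintype.card K ^ (i : ℕ) with hGm
  set Zm : Matrix (Fin (n - k - t) × Fin ℓ) (Fin n) L :=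
    Matrix.of fun p j => E p.2 j ^ Fintype.card K ^ (p.1 : ℕ) with hZm
  -- Part 2
  have key2 : ∀ c : Fin (n - t - 1) → L, c ≠ 0 → t + 2 ≤ (extV γ (c ᵥ* Gm)).rank := by
    intro c hc
    obtain ⟨f, hf⟩ := LO_exists_qlinear (K := K) (L := L) c
    have hv : (c ᵥ* Gm) = fun j => f (g j) := by
      funext j
      simp [Matrix.vecMul, dotProduct, hf, hGm]
    rw [LO_extV_rank, hv]
    have hrange : Set.range (fun j => f (g j)) = ⇑f '' Set.range g := by
      rw [← Set.range_comp]; rfl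
    rw [hrange, ← Submodule.map_span]
    set S := span K (Set.range g) with hS
    have hSn : finrank K S = n := by rw [← LO_extV_rank γ g]; exact hg
    have hrn := LinearMap.finrank_range_add_finrank_ker (f.domRestrict S)
    rw [LinearMap.range_domRestrict, hSn] at hrn
    have hmemk : ∀ x : LinearMap.ker (f.domRestrict S), f ((x : S) : L) = 0 := fun x => by
      have hx := x.2
      rwa [LinearMap.mem_ker, LinearMap.domRestrict_apply] at hx
    have hker1 : finrank K (LinearMap.ker (f.domRestrict S)) ≤ finrank K (LinearMap.ker f) := by
      refine LinearMap.finrank_le_finrank_of_injective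
        (f := LinearMap.codRestrict (LinearMap.ker f)
          (S.subtype ∘ₗ (LinearMap.ker (f.domRestrict S)).subtype)
          (fun x => by simpa [LinearMap.mem_ker] using hmemk x)) ?_
      intro a b hab
      have h1 := congrArg Subtype.val hab
      exact Subtype.ext (Subtype.ext h1)
    have hker2 : finrank K (LinearMap.ker f) ≤ n - t - 1 - 1 := LO_finrank_ker_le c hc f hf
    omega
  -- factorization
  obtain ⟨b, A, hAb⟩ := LO_exists_factorization γ E hEq
  have hZrow : ∀ (p : Fin (n - k - t) × Fin ℓ) (j : Fin n),
      Zm p j = ∑ s, A p.2 s ^ Fintype.card K ^ (p.1 : ℕ) * algebraMap K L (b s j) := by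
    intro p j
    rw [hZm]
    simp only [Matrix.of_apply]
    rw [hAb, LO_sum_pow K]
    refine Finset.sum_congr rfl fun s _ => ?_
    rw [mul_pow, ← map_pow, FiniteField.pow_card_pow]
  -- Part 3
  have key3 : ∀ c : Fin (n - k - t) × Fin ℓ → L, (extV γ (c ᵥ* Zm)).rank ≤ t := by
    intro c
    rw [LO_extV_rank]
    set w : Fin t → L := fun s => ∑ p, c p * A p.2 s ^ Fintype.card K ^ (p.1 : ℕ) with hw
    have hv : ∀ j, (c ᵥ* Zm) j = ∑ s, (b s j) • w s := by
      intro j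
      have h0 : (c ᵥ* Zm) j = ∑ p, c p * Zm p j := by
        simp [Matrix.vecMul, dotProduct]
      rw [h0]
      calc ∑ p, c p * Zm p j
          = ∑ p, ∑ s, c p * (A p.2 s ^ Fintype.card K ^ (p.1 : ℕ) * algebraMap K L (b s j)) := by
            refine Finset.sum_congr rfl fun p _ => ?_
            rw [hZrow, Finset.mul_sum]
        _ = ∑ s, ∑ p, c p * (A p.2 s ^ Fintype.card K ^ (p.1 : ℕ) * algebraMap K L (b s j)) :=
            Finset.sum_comm
        _ = ∑ s, (b s j) • w s := by
            refine Finset.sum_congr rfl fun s _ => ?_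
            simp only [hw, Algebra.smul_def, Finset.mul_sum]
            exact Finset.sum_congr rfl fun p _ => by ring
    have hsub : span K (Set.range (c ᵥ* Zm)) ≤ span K (Set.range w) := by
      rw [Submodule.span_le]
      rintro x ⟨j, rfl⟩
      rw [hv]
      exact Submodule.sum_mem _ fun s _ =>
        Submodule.smul_mem _ _ (subset_span (Set.mem_range_self s))
    refine (Submodule.finrank_mono hsub).trans ?_
    calc finrank K (span K (Set.range w)) = Set.finrank K (Set.range w) := rfl
      _ ≤ Fintype.card (Fin t) := finrank_range_le_card w
      _ = t := by simp
  -- Part 1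
  have key1 : Zm.rank = t := by
    rw [Matrix.rank_eq_finrank_span_row, Matrix.row]
    have hupper : span L (Set.range Zm) ≤
        span L (Set.range fun s : Fin t => fun j => algebraMap K L (b s j)) := by
      rw [Submodule.span_le]
      rintro x ⟨p, rfl⟩
      have hZp : Zm p = ∑ s, (A p.2 s ^ Fintype.card K ^ (p.1 : ℕ))
          • (fun j => algebraMap K L (b s j)) := by
        funext j
        rw [hZrow]
        simp [Finset.sum_apply, smul_eq_mul]
      rw [hZp]
      exact Submodule.sum_mem _ fun s _ =>
        Submodule.smul_mem _ _ (subset_span (Set.mem_range_self s))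
    have hlower : span L (Set.range E) ≤ span L (Set.range Zm) := by
      refine Submodule.span_mono ?_
      rintro x ⟨i, rfl⟩
      have h0 : (0 : ℕ) < n - k - t := by omega
      refine ⟨(⟨0, h0⟩, i), ?_⟩
      funext j
      simp [hZm]
    have hEr : finrank L (span L (Set.range E)) = t := by
      rw [Matrix.rank_eq_finrank_span_row] at hEqm; exact hEqm
    have h1 : finrank L (span L (Set.range Zm)) ≤ t := by
      refine (Submodule.finrank_mono hupper).trans ?_
      calc finrank L (span L (Set.range fun s : Fin t => fun j => algebraMap K L (b s j)))
          = Set.finrank L (Set.range fun s : Fin t => fun j => algebraMap K L (b s j)) := rfl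
        _ ≤ Fintype.card (Fin t) := finrank_range_le_card _
        _ = t := by simp
    have h2 : finrank L (span L (Set.range E)) ≤ finrank L (span L (Set.range Zm)) :=
      Submodule.finrank_mono hlower
    omega
  -- Part 4
  have key4 : (Matrix.fromRows Gm Zm).rank = n - 1 := by
    rw [Matrix.rank_eq_finrank_span_row, Matrix.row]
    have hrange : Set.range (Matrix.fromRows Gm Zm) = Set.range Gm ∪ Set.range Zm :=
      Set.Sum.elim_range Gm Zm
    rw [hrange, Submodule.span_union]
    set U := span L (Set.range Gm) with hU
    set V := span L (Set.range Zm) with hV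
    have hvecG : ∀ cg : Fin (n - t - 1) → L, cg ᵥ* Gm = ∑ i, cg i • Gm i := by
      intro cg
      funext j
      simp [Matrix.vecMul, dotProduct, Finset.sum_apply]
    have hvecZ : ∀ cz : Fin (n - k - t) × Fin ℓ → L, cz ᵥ* Zm = ∑ p, cz p • Zm p := by
      intro cz
      funext j
      simp [Matrix.vecMul, dotProduct, Finset.sum_apply]
    have hext0 : (extV γ (0 : Fin n → L)).rank = 0 := by
      have h0 : extV γ (0 : Fin n → L) = 0 := by
        ext i j
        simp [extV]
      rw [h0, Matrix.rank_zero]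
    have hli : LinearIndependent L (fun i => Gm i) := by
      rw [Fintype.linearIndependent_iff]
      intro cg hsum0 i
      have hcg0 : cg = 0 := by
        by_contra hne
        have h2 := key2 cg hne
        have hx : cg ᵥ* Gm = 0 := by rw [hvecG]; exact hsum0
        rw [hx, hext0] at h2
        omega
      exact congrFun hcg0 i
    have hUr : finrank L U = n - t - 1 := by
      rw [hU]
      rw [finrank_span_eq_card hli]
      simp
    have hVr : finrank L V = t := by
      rw [hV]
      exact (Matrix.rank_eq_finrank_span_row Zm).symm.trans key1
    have hUV : U ⊓ V = ⊥ := by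
      rw [eq_bot_iff]
      intro x hx
      rw [Submodule.mem_inf] at hx
      obtain ⟨hxU, hxV⟩ := hx
      obtain ⟨cg, hcg⟩ := (mem_span_range_iff_exists_fun L).mp hxU
      obtain ⟨cz, hcz⟩ := (mem_span_range_iff_exists_fun L).mp hxV
      rw [Submodule.mem_bot]
      by_contra hxne
      have hcgne : cg ≠ 0 := by
        intro h
        rw [h] at hcg
        simp at hcg
        exact hxne hcg.symm
      have h2 := key2 cg hcgne
      have h3 := key3 cz
      rw [hvecG, hcg] at h2
      rw [hvecZ, hcz] at h3
      omega
    have hfin := Submodule.finrank_sup_add_finrank_inf_eq U V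
    rw [hUV, finrank_bot, hUr, hVr] at hfin
    omega
  exact ⟨key1, key2, key3, key4⟩
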